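/- Let W be a stochastic matrix from a finite set X to pmfs on a finite set Y. Then the order-α Rényi center q_{α,W} is a continuous function of α on (0,1] with respect to total variation distance: for every α ∈ (0,1], lim_{β→α} ‖q_{β,W} − q_{α,W}‖₁ = 0. -/

import Mathlib

open Real MeasureTheory Filter

def IsPMF {Y : Type*} [Fintype Y] (W : Y → ℝ) : Prop :=
  (∀ y, 0 ≤ W y) ∧ ∑ y, W y = 1

noncomputable def renyiDiv {Y : Type*} [Fintype Y] (α : ℝ) (W Q : Y → ℝ) : ℝ :=
  if α = 1 then ∑ y, W y * Real.log (W y / Q y)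
  else (α - 1)⁻¹ * Real.log (∑ y, W y ^ α * Q y ^ (1 - α))

open Classical in
/-- Extended-real-valued order-`α` Rényi divergence, taking the value `⊤` when the
divergence is infinite. -/
noncomputable def renyiDivE {Y : Type*} [Fintype Y] (α : ℝ) (W Q : Y → ℝ) : ENNReal :=
  if α = 1 then
    (if ∀ y, Q y = 0 → W y = 0 then ENNReal.ofReal (renyiDiv 1 W Q) else ⊤)
  else
    (if 0 < ∑ y, W y ^ α * Q y ^ (1 - α) then ENNReal.ofReal (renyiDiv α W Q) else ⊤)

/-- The order-`α` tilted pmf `W^α_Q`. -/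
noncomputable def tilt {Y : Type*} [Fintype Y] (α : ℝ) (W Q : Y → ℝ) : Y → ℝ :=
  fun y => Real.exp ((1 - α) * renyiDiv α W Q) * W y ^ α * Q y ^ (1 - α)

/-- The order-`α` Rényi information `I_α(P;W)` (mutual information for `α = 1`). -/
noncomputable def renyiInfo {X Y : Type*} [Fintype X] [Fintype Y] (α : ℝ) (P : X → ℝ)
    (W : X → Y → ℝ) : ℝ :=
  if α = 1 then ∑ x, P x * ∑ y, W x y * Real.log (W x y / (∑ x', P x' * W x' y))
  else (α / (α - 1)) * Real.log (∑ y, (∑ x, P x * W x y ^ α) ^ α⁻¹)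

/-- The order-`α` Rényi capacity `C_α(W) = sup_P I_α(P;W)`. -/
noncomputable def renyiCap {X Y : Type*} [Fintype X] [Fintype Y] (α : ℝ) (W : X → Y → ℝ) : ℝ :=
  sSup {c | ∃ P : X → ℝ, IsPMF P ∧ c = renyiInfo α P W}

/-- The sphere packing exponent `E_sp(R,W)`. -/
noncomputable def spe {X Y : Type*} [Fintype X] [Fintype Y] (R : ℝ) (W : X → Y → ℝ) : ℝ :=
  sSup {e | ∃ α ∈ Set.Ioo (0:ℝ) 1, e = ((1 - α) / α) * (renyiCap α W - R)}

/-- The order-`α` Rényi mean `q_{α,P}`. -/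
noncomputable def renyiMean {X Y : Type*} [Fintype X] [Fintype Y] (α : ℝ) (P : X → ℝ)
    (W : X → Y → ℝ) : Y → ℝ :=
  fun y => (∑ x, P x * W x y ^ α) ^ α⁻¹ / ∑ y', (∑ x, P x * W x y' ^ α) ^ α⁻¹


namespace RCaux


variable {Y : Type*} [Fintype Y]

/-- The basic sum `∑ p^s r^(1-s)`. -/
noncomputable def Zs (s : ℝ) (p r : Y → ℝ) : ℝ := ∑ y, p y ^ s * r y ^ (1 - s)

lemma Zs_nonneg {s : ℝ} {p r : Y → ℝ} (hp : ∀ y, 0 ≤ p y) (hr : ∀ y, 0 ≤ r y) :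
    0 ≤ Zs s p r :=
  Finset.sum_nonneg fun y _ => mul_nonneg (Real.rpow_nonneg (hp y) _) (Real.rpow_nonneg (hr y) _)

lemma renyiDiv_eq {β : ℝ} (hβ : β ≠ 1) (p r : Y → ℝ) :
    renyiDiv β p r = (β - 1)⁻¹ * Real.log (Zs β p r) := by
  rw [renyiDiv, if_neg hβ]; rfl

lemma Zs_le_one {s : ℝ} {p r : Y → ℝ} (hs0 : 0 < s) (hs1 : s < 1)
    (hp : IsPMF p) (hr : IsPMF r) : Zs s p r ≤ 1 := by
  have h : Zs s p r ≤ ∑ y, (s * p y + (1 - s) * r y) := by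
    refine Finset.sum_le_sum fun y _ => ?_
    exact Real.geom_mean_le_arith_mean2_weighted hs0.le (by linarith) (hp.1 y) (hr.1 y) (by ring)
  calc Zs s p r ≤ ∑ y, (s * p y + (1 - s) * r y) := h
    _ = 1 := by rw [Finset.sum_add_distrib, ← Finset.mul_sum, ← Finset.mul_sum, hp.2, hr.2]; ring

lemma strict_amgm {s a b : ℝ} (hs0 : 0 < s) (hs1 : s < 1) (ha : 0 ≤ a) (hb : 0 ≤ b)
    (hab : a ≠ b) : a ^ s * b ^ (1 - s) < s * a + (1 - s) * b := by
  rcases eq_or_lt_of_le ha with ha0 | ha0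
  · rcases eq_or_lt_of_le hb with hb0 | hb0
    · exact absurd (ha0.symm.trans hb0) hab
    · rw [← ha0, Real.zero_rpow hs0.ne', zero_mul]
      nlinarith
  · rcases eq_or_lt_of_le hb with hb0 | hb0
    · rw [← hb0, Real.zero_rpow (by linarith : (1:ℝ) - s ≠ 0), mul_zero]
      nlinarith
    · have := strictConcaveOn_log_Ioi.2 (Set.mem_Ioi.2 ha0) (Set.mem_Ioi.2 hb0) hab hs0
        (by linarith : (0:ℝ) < 1 - s) (by ring)
      have hlt : s * Real.log a + (1 - s) * Real.log b < Real.log (s * a + (1 - s) * b) := by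
        simpa [smul_eq_mul] using this
      have h1 : a ^ s * b ^ (1 - s) = Real.exp (s * Real.log a + (1 - s) * Real.log b) := by
        rw [Real.exp_add, Real.rpow_def_of_pos ha0, Real.rpow_def_of_pos hb0, mul_comm s,
          mul_comm (1 - s)]
      have h2 : s * a + (1 - s) * b = Real.exp (Real.log (s * a + (1 - s) * b)) := by
        rw [Real.exp_log (by nlinarith)]
      rw [h1, h2]
      exact Real.exp_lt_exp.2 hlt

lemma Zs_lt_one {s : ℝ} {p r : Y → ℝ} (hs0 : 0 < s) (hs1 : s < 1)
    (hp : IsPMF p) (hr : IsPMF r) (hne : p ≠ r) : Zs s p r < 1 := by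
  obtain ⟨y0, hy0⟩ : ∃ y, p y ≠ r y := by
    by_contra h; push_neg at h; exact hne (funext h)
  have h : Zs s p r < ∑ y, (s * p y + (1 - s) * r y) := by
    refine Finset.sum_lt_sum (fun y _ => Real.geom_mean_le_arith_mean2_weighted hs0.le
      (by linarith) (hp.1 y) (hr.1 y) (by ring)) ⟨y0, Finset.mem_univ _, ?_⟩
    exact strict_amgm hs0 hs1 (hp.1 y0) (hr.1 y0) hy0
  calc Zs s p r < ∑ y, (s * p y + (1 - s) * r y) := h
    _ = 1 := by rw [Finset.sum_add_distrib, ← Finset.mul_sum, ← Finset.mul_sum, hp.2, hr.2]; ring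

lemma Zs_pos {s : ℝ} {p r : Y → ℝ} (hs0 : 0 < s) (hs1 : s < 1)
    (hp : ∀ y, 0 ≤ p y) (hr : ∀ y, 0 ≤ r y) (h : ∃ y, 0 < p y ∧ 0 < r y) :
    0 < Zs s p r := by
  obtain ⟨y, hy1, hy2⟩ := h
  have hterm : 0 < p y ^ s * r y ^ (1 - s) :=
    mul_pos (Real.rpow_pos_of_pos hy1 _) (Real.rpow_pos_of_pos hy2 _)
  refine lt_of_lt_of_le hterm (Finset.single_le_sum (f := fun y => p y ^ s * r y ^ (1 - s))
    (fun y _ => mul_nonneg (Real.rpow_nonneg (hp y) _) (Real.rpow_nonneg (hr y) _))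
    (Finset.mem_univ y))

lemma exists_pos_of_Zs_pos {s : ℝ} {p r : Y → ℝ} (hs0 : 0 < s) (hs1 : s < 1)
    (hp : ∀ y, 0 ≤ p y) (hr : ∀ y, 0 ≤ r y) (h : 0 < Zs s p r) :
    ∃ y, 0 < p y ∧ 0 < r y := by
  by_contra hc
  push_neg at hc
  have : Zs s p r = 0 := by
    refine Finset.sum_eq_zero fun y _ => ?_
    rcases eq_or_lt_of_le (hp y) with h1 | h1
    · rw [← h1, Real.zero_rpow hs0.ne', zero_mul]
    · have := hc y h1
      have h2 : r y = 0 := le_antisymm this (hr y)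
      rw [h2, Real.zero_rpow (by linarith : (1:ℝ) - s ≠ 0), mul_zero]
  rw [this] at h; exact lt_irrefl _ h

lemma renyiDiv_nonneg {β : ℝ} {p r : Y → ℝ} (hβ0 : 0 < β) (hβ1 : β < 1)
    (hp : IsPMF p) (hr : IsPMF r) : 0 ≤ renyiDiv β p r := by
  rw [renyiDiv_eq hβ1.ne p r]
  have h1 : Real.log (Zs β p r) ≤ 0 :=
    Real.log_nonpos (Zs_nonneg hp.1 hr.1) (Zs_le_one hβ0 hβ1 hp hr)
  have h2 : (β - 1)⁻¹ ≤ 0 := inv_nonpos.2 (by linarith)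
  nlinarith

lemma exp_le_Zs {β c : ℝ} {p r : Y → ℝ} (hβ1 : β < 1) (hZ : 0 < Zs β p r)
    (hD : (β - 1)⁻¹ * Real.log (Zs β p r) ≤ c) :
    Real.exp ((β - 1) * c) ≤ Zs β p r := by
  have hb : β - 1 < 0 := by linarith
  have h1 : (β - 1) * c ≤ Real.log (Zs β p r) := by
    have := mul_le_mul_of_nonpos_left hD hb.le
    rwa [← mul_assoc, mul_inv_cancel₀ hb.ne, one_mul] at this
  calc Real.exp ((β - 1) * c) ≤ Real.exp (Real.log (Zs β p r)) := Real.exp_le_exp.2 h1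
    _ = Zs β p r := Real.exp_log hZ

lemma div_le_of_exp_le_Zs {β c : ℝ} {p r : Y → ℝ} (hβ1 : β < 1)
    (h : Real.exp ((β - 1) * c) ≤ Zs β p r) :
    (β - 1)⁻¹ * Real.log (Zs β p r) ≤ c := by
  have hb : β - 1 < 0 := by linarith
  have h1 : (β - 1) * c ≤ Real.log (Zs β p r) := by
    calc (β - 1) * c = Real.log (Real.exp ((β - 1) * c)) := (Real.log_exp _).symm
      _ ≤ Real.log (Zs β p r) := Real.log_le_log (Real.exp_pos _) h
  have h2 := mul_le_mul_of_nonpos_left h1 (inv_nonpos.2 hb.le)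
  rwa [← mul_assoc, inv_mul_cancel₀ hb.ne, one_mul] at h2

/-- Gibbs: KL divergence is nonnegative under absolute continuity. -/
lemma gibbs {p r : Y → ℝ} (hp : IsPMF p) (hr : IsPMF r)
    (hac : ∀ y, r y = 0 → p y = 0) : 0 ≤ renyiDiv 1 p r := by
  rw [renyiDiv, if_pos rfl]
  have key : ∀ y, p y - r y ≤ p y * Real.log (p y / r y) := by
    intro y
    rcases eq_or_lt_of_le (hp.1 y) with h0 | h0
    · rw [← h0]; simp [(hr.1 y)]
    · have hry : 0 < r y := by
        rcases eq_or_lt_of_le (hr.1 y) with h1 | h1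
        · exact absurd (hac y h1.symm) (by linarith)
        · exact h1
      have hlog : Real.log (r y / p y) ≤ r y / p y - 1 :=
        Real.log_le_sub_one_of_pos (div_pos hry h0)
      have hlog2 : 1 - r y / p y ≤ Real.log (p y / r y) := by
        have hinv : Real.log (p y / r y) = -Real.log (r y / p y) := by
          rw [← Real.log_inv]; congr 1; field_simp
        rw [hinv]; linarith
      calc p y - r y = p y * (1 - r y / p y) := by field_simp
        _ ≤ p y * Real.log (p y / r y) := mul_le_mul_of_nonneg_left hlog2 h0.le
  calc (0:ℝ) = ∑ y, (p y - r y) := by rw [Finset.sum_sub_distrib, hp.2, hr.2]; ring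
    _ ≤ ∑ y, p y * Real.log (p y / r y) := Finset.sum_le_sum fun y _ => key y

variable {Y : Type*} [Fintype Y]


-- key pointwise rewriting: p * ((r/p)^(1-b)) = p^b * r^(1-b) for p,r ≥ 0, 0<b<1
lemma term_eq {b : ℝ} (hb0 : 0 < b) (hb1 : b < 1) {p r : ℝ} (hp : 0 ≤ p) (hr : 0 ≤ r) :
    p * (r / p) ^ (1 - b) = p ^ b * r ^ (1 - b) := by
  rcases eq_or_lt_of_le hp with h0 | h0
  · rw [← h0, Real.zero_rpow hb0.ne']
    simp [Real.zero_rpow (by linarith : (1:ℝ) - b ≠ 0)]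
  · have h1 : p ^ b * p ^ (1 - b) = p := by
      rw [← Real.rpow_add h0]; norm_num
    have hpb : (0:ℝ) < p ^ (1 - b) := Real.rpow_pos_of_pos h0 _
    rw [Real.div_rpow hr h0.le, mul_div_assoc', div_eq_iff hpb.ne']
    linear_combination (-(r ^ (1 - b))) * h1

/-- Monotonicity of Rényi divergence in the order, both orders `< 1`. -/
lemma renyiDiv_mono {a b : ℝ} (ha : 0 < a) (hab : a ≤ b) (hb : b < 1)
    {p r : Y → ℝ} (hp : IsPMF p) (hr : ∀ y, 0 ≤ r y) (hZ : 0 < Zs b p r) :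
    renyiDiv a p r ≤ renyiDiv b p r := by
  have ha1 : a < 1 := lt_of_le_of_lt hab hb
  set e : ℝ := (1 - a) / (1 - b) with he
  have hbpos : (0:ℝ) < 1 - b := by linarith
  have hepos : 1 ≤ e := by
    rw [he, le_div_iff₀ hbpos]; linarith
  set z : Y → ℝ := fun y => (r y / p y) ^ (1 - b) with hz
  have hz_nonneg : ∀ y ∈ Finset.univ, 0 ≤ z y := fun y _ =>
    Real.rpow_nonneg (div_nonneg (hr y) (hp.1 y)) _
  have key := Real.arith_mean_le_rpow_mean Finset.univ p z (fun y _ => hp.1 y) hp.2 hz_nonneg hepos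
  have h1 : ∑ y, p y * z y = Zs b p r := by
    refine Finset.sum_congr rfl fun y _ => term_eq ?_ hb (hp.1 y) (hr y)
    linarith
  have h2 : ∑ y, p y * z y ^ e = Zs a p r := by
    refine Finset.sum_congr rfl fun y _ => ?_
    have hco : (1 - b) * e = 1 - a := by
      rw [he]; field_simp
    have : z y ^ e = (r y / p y) ^ (1 - a) := by
      rw [hz, ← Real.rpow_mul (div_nonneg (hr y) (hp.1 y)), hco]
    rw [this]
    exact term_eq ha ha1 (hp.1 y) (hr y)
  rw [h1, h2] at key
  -- key : Zs b p r ≤ (Zs a p r) ^ (1/e)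
  have hZa : 0 < Zs a p r := by
    by_contra hc
    push_neg at hc
    have : Zs a p r = 0 := le_antisymm hc (Zs_nonneg hp.1 hr)
    rw [this, Real.zero_rpow (by positivity : (1:ℝ)/e ≠ 0)] at key
    linarith
  have hlog : Real.log (Zs b p r) ≤ (1/e) * Real.log (Zs a p r) := by
    calc Real.log (Zs b p r) ≤ Real.log ((Zs a p r) ^ ((1:ℝ)/e)) := Real.log_le_log hZ key
      _ = (1/e) * Real.log (Zs a p r) := Real.log_rpow hZa _
  rw [renyiDiv_eq ha1.ne, renyiDiv_eq hb.ne]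
  have hbneg : (b - 1 : ℝ) < 0 := by linarith
  have := mul_le_mul_of_nonpos_left hlog (inv_nonpos.2 hbneg.le)
  refine le_trans (le_of_eq ?_) this
  have hane : (1:ℝ) - a ≠ 0 := by linarith
  have hbne : (1:ℝ) - b ≠ 0 := by linarith
  have hane' : (a:ℝ) - 1 ≠ 0 := by linarith
  have hbne' : (b:ℝ) - 1 ≠ 0 := by linarith
  have hco : (a - 1)⁻¹ = (b - 1)⁻¹ * (1 / e) := by
    rw [he]
    field_simp
    ring
  rw [hco, mul_assoc]

/-- Monotonicity up to order 1: `D_a ≤ KL` under absolute continuity. -/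
lemma renyiDiv_le_KL {a : ℝ} (ha : 0 < a) (ha1 : a < 1)
    {p r : Y → ℝ} (hp : IsPMF p) (hr : ∀ y, 0 ≤ r y)
    (hac : ∀ y, r y = 0 → p y = 0) :
    renyiDiv a p r ≤ renyiDiv 1 p r := by
  set z : Y → ℝ := fun y => (r y / p y) ^ (1 - a) with hzdef
  have hz_nonneg : ∀ y ∈ Finset.univ, 0 ≤ z y := fun y _ =>
    Real.rpow_nonneg (div_nonneg (hr y) (hp.1 y)) _
  have key := Real.geom_mean_le_arith_mean_weighted Finset.univ p z (fun y _ => hp.1 y) hp.2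
    hz_nonneg
  have hprod : ∏ y, z y ^ p y = Real.exp (-(1 - a) * ∑ y, p y * Real.log (p y / r y)) := by
    have step1 : ∀ y, z y ^ p y = Real.exp (p y * Real.log (z y)) := by
      intro y
      rcases eq_or_lt_of_le (hp.1 y) with h0 | h0
      · rw [← h0, Real.rpow_zero, zero_mul, Real.exp_zero]
      · have hry : 0 < r y := by
          rcases eq_or_lt_of_le (hr y) with h1 | h1
          · exact absurd (hac y h1.symm) (by linarith)
          · exact h1
        have hzpos : 0 < z y := Real.rpow_pos_of_pos (div_pos hry h0) _
        rw [Real.rpow_def_of_pos hzpos, mul_comm]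
    have step2 : ∀ y, p y * Real.log (z y) = -(1 - a) * (p y * Real.log (p y / r y)) := by
      intro y
      rcases eq_or_lt_of_le (hp.1 y) with h0 | h0
      · rw [← h0]; ring
      · have hry : 0 < r y := by
          rcases eq_or_lt_of_le (hr y) with h1 | h1
          · exact absurd (hac y h1.symm) (by linarith)
          · exact h1
        have hlz : Real.log (z y) = (1 - a) * Real.log (r y / p y) :=
          Real.log_rpow (div_pos hry h0) _
        have hneg : Real.log (r y / p y) = -Real.log (p y / r y) := by
          rw [Real.log_div hry.ne' h0.ne', Real.log_div h0.ne' hry.ne']; ring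
        rw [hlz, hneg]; ring
    calc ∏ y, z y ^ p y = ∏ y, Real.exp (p y * Real.log (z y)) :=
          Finset.prod_congr rfl fun y _ => step1 y
      _ = Real.exp (∑ y, p y * Real.log (z y)) := by rw [Real.exp_sum]
      _ = Real.exp (-(1 - a) * ∑ y, p y * Real.log (p y / r y)) := by
          congr 1
          rw [Finset.mul_sum]
          exact Finset.sum_congr rfl fun y _ => step2 y
  have h1 : ∑ y, p y * z y = Zs a p r :=
    Finset.sum_congr rfl fun y _ => term_eq ha ha1 (hp.1 y) (hr y)
  rw [hprod, h1] at key
  set KL : ℝ := ∑ y, p y * Real.log (p y / r y) with hKL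
  have hZa : 0 < Zs a p r := lt_of_lt_of_le (Real.exp_pos _) key
  have hlog : -(1 - a) * KL ≤ Real.log (Zs a p r) := by
    calc -(1 - a) * KL = Real.log (Real.exp (-(1 - a) * KL)) := (Real.log_exp _).symm
      _ ≤ Real.log (Zs a p r) := Real.log_le_log (Real.exp_pos _) key
  rw [renyiDiv_eq ha1.ne, renyiDiv, if_pos rfl, ← hKL]
  have haneg : (a - 1 : ℝ) < 0 := by linarith
  have := mul_le_mul_of_nonpos_left hlog (inv_nonpos.2 haneg.le)
  refine le_trans this (le_of_eq ?_)
  have : -(1 - a) = a - 1 := by ring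
  rw [this, ← mul_assoc, inv_mul_cancel₀ haneg.ne, one_mul]
variable {Y : Type*} [Fintype Y]


/-- continuity of Zs in the pair (p,r). -/
lemma continuous_Zs_pair {s : ℝ} (hs0 : 0 < s) (hs1 : s < 1) :
    Continuous (fun pr : (Y → ℝ) × (Y → ℝ) => Zs s pr.1 pr.2) := by
  unfold Zs
  refine continuous_finset_sum _ fun y _ => Continuous.mul ?_ ?_
  · have h : Continuous fun pr : (Y → ℝ) × (Y → ℝ) => pr.1 y :=
      (continuous_apply y).comp continuous_fst
    exact continuous_iff_continuousAt.2 fun pr =>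
      (Real.continuousAt_rpow_const _ _ (Or.inr hs0.le)).comp h.continuousAt
  · have h : Continuous fun pr : (Y → ℝ) × (Y → ℝ) => pr.2 y :=
      (continuous_apply y).comp continuous_snd
    exact continuous_iff_continuousAt.2 fun pr =>
      (Real.continuousAt_rpow_const _ _ (Or.inr (by linarith : (0:ℝ) ≤ 1 - s))).comp h.continuousAt

/-- the simplex is compact. -/
lemma isCompact_simplex_pair :
    IsCompact {pr : (Y → ℝ) × (Y → ℝ) | IsPMF pr.1 ∧ IsPMF pr.2} := by
  have hIcc : IsCompact (Set.pi Set.univ fun _ : Y => Set.Icc (0:ℝ) 1) :=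
    isCompact_univ_pi fun _ => isCompact_Icc
  have hsub : {p : Y → ℝ | IsPMF p} ⊆ Set.pi Set.univ fun _ : Y => Set.Icc (0:ℝ) 1 := by
    intro p hp y _
    refine ⟨hp.1 y, ?_⟩
    have h1 : p y ≤ ∑ y', p y' :=
      Finset.single_le_sum (fun y' _ => hp.1 y') (Finset.mem_univ y)
    rw [hp.2] at h1; exact h1
  have hclosed : IsClosed {p : Y → ℝ | IsPMF p} := by
    have h1 : IsClosed {p : Y → ℝ | ∀ y, 0 ≤ p y} := by
      have : {p : Y → ℝ | ∀ y, 0 ≤ p y} = ⋂ y, {p : Y → ℝ | 0 ≤ p y} := by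
        ext p; simp
      rw [this]
      exact isClosed_iInter fun y => isClosed_le continuous_const (continuous_apply y)
    have h2 : IsClosed {p : Y → ℝ | ∑ y, p y = 1} :=
      isClosed_eq (continuous_finset_sum _ fun y _ => continuous_apply y) continuous_const
    exact h1.inter h2
  have : {pr : (Y → ℝ) × (Y → ℝ) | IsPMF pr.1 ∧ IsPMF pr.2} =
      ({p : Y → ℝ | IsPMF p} ×ˢ {p : Y → ℝ | IsPMF p}) := rfl
  rw [this]
  exact ((hIcc.of_isClosed_subset hclosed hsub).prod (hIcc.of_isClosed_subset hclosed hsub))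

/-- Pinsker substitute: if `Zs s p r` is close to 1 then `p` and `r` are close in TV. -/
lemma tv_lemma {s : ℝ} (hs0 : 0 < s) (hs1 : s < 1) {ε : ℝ} (hε : 0 < ε) :
    ∃ η : ℝ, 0 < η ∧ η < 1 ∧ ∀ p r : Y → ℝ, IsPMF p → IsPMF r →
      1 - η < Zs s p r → ∑ y, |p y - r y| < ε := by
  set K : Set ((Y → ℝ) × (Y → ℝ)) :=
    {pr | (IsPMF pr.1 ∧ IsPMF pr.2) ∧ ε ≤ ∑ y, |pr.1 y - pr.2 y|} with hK
  have hKc : IsCompact K := by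
    refine isCompact_simplex_pair.of_isClosed_subset ?_ fun pr h => h.1
    have hcont : Continuous fun pr : (Y → ℝ) × (Y → ℝ) => ∑ y, |pr.1 y - pr.2 y| :=
      continuous_finset_sum _ fun y _ =>
        (((continuous_apply y).comp continuous_fst).sub
          ((continuous_apply y).comp continuous_snd)).abs
    have h2 : IsClosed {pr : (Y → ℝ) × (Y → ℝ) | ε ≤ ∑ y, |pr.1 y - pr.2 y|} :=
      isClosed_le continuous_const hcont
    have h1 : IsClosed {pr : (Y → ℝ) × (Y → ℝ) | IsPMF pr.1 ∧ IsPMF pr.2} :=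
      isCompact_simplex_pair.isClosed
    exact (h1.inter h2)
  rcases K.eq_empty_or_nonempty with hne | hne
  · refine ⟨1/2, by norm_num, by norm_num, fun p r hp hr _ => ?_⟩
    by_contra hc
    push_neg at hc
    have : (p, r) ∈ K := ⟨⟨hp, hr⟩, hc⟩
    rw [hne] at this; exact this
  · obtain ⟨pr₀, h₀, hmax⟩ := hKc.exists_isMaxOn hne (continuous_Zs_pair hs0 hs1).continuousOn
    set M : ℝ := Zs s pr₀.1 pr₀.2 with hM
    have hMlt : M < 1 := by
      refine Zs_lt_one hs0 hs1 h₀.1.1 h₀.1.2 ?_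
      intro hcontra
      have hzero : ∑ y, |pr₀.1 y - pr₀.2 y| = 0 := by
        rw [hcontra]; simp
      have := h₀.2
      rw [hzero] at this; linarith
    refine ⟨min (1 - M) (1/2), lt_min (by linarith) (by norm_num),
      lt_of_le_of_lt (min_le_right _ _) (by norm_num), fun p r hp hr hZ => ?_⟩
    by_contra hc
    push_neg at hc
    have hmem : (p, r) ∈ K := ⟨⟨hp, hr⟩, hc⟩
    have hle : Zs s p r ≤ M := hmax hmem
    have : 1 - min (1 - M) (1/2) < M := lt_of_lt_of_le hZ hle
    have h2 : min (1 - M) (1/2) ≤ 1 - M := min_le_left _ _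
    linarith

variable {Y : Type*} [Fintype Y]


/-- continuity of `β ↦ c ^ (g β)` when `c ≥ 0` and `g t` positive or `c ≠ 0`. -/
lemma contAt_rpow_exponent {c t : ℝ} {g : ℝ → ℝ} (hg : ContinuousAt g t)
    (h : c ≠ 0 ∨ 0 < g t) : ContinuousAt (fun β => c ^ g β) t := by
  have hpair : ContinuousAt (fun β : ℝ => ((c, g β) : ℝ × ℝ)) t :=
    ContinuousAt.prodMk continuousAt_const hg
  show Tendsto ((fun p : ℝ × ℝ => p.1 ^ p.2) ∘ fun β : ℝ => (c, g β)) (nhds t) (nhds (c ^ g t))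
  exact Filter.Tendsto.comp (Real.continuousAt_rpow (c, g t) h) hpair

/-- continuity of `β ↦ Zs β p r` at `t ∈ (0,1)`. -/
lemma contAt_Zs {t : ℝ} (ht0 : 0 < t) (ht1 : t < 1) (p r : Y → ℝ) :
    ContinuousAt (fun β => Zs β p r) t := by
  unfold Zs
  refine tendsto_finset_sum _ fun y _ => ContinuousAt.mul ?_ ?_
  · rcases eq_or_ne (p y) 0 with h | h
    · exact contAt_rpow_exponent continuousAt_id (Or.inr (by simpa using ht0))
    · exact contAt_rpow_exponent continuousAt_id (Or.inl h)
  · have hg : ContinuousAt (fun β : ℝ => 1 - β) t := (continuousAt_const.sub continuousAt_id)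
    rcases eq_or_ne (r y) 0 with h | h
    · exact contAt_rpow_exponent hg (Or.inr (by simpa using (by linarith : (0:ℝ) < 1 - t)))
    · exact contAt_rpow_exponent hg (Or.inl h)

/-- continuity of the Rényi divergence in the order at `t ∈ (0,1)`. -/
lemma tendsto_renyiDiv_of_lt_one {t : ℝ} (ht0 : 0 < t) (ht1 : t < 1)
    {p r : Y → ℝ} (hZ : 0 < Zs t p r) :
    Tendsto (fun β => renyiDiv β p r) (nhds t) (nhds (renyiDiv t p r)) := by
  have hF : ContinuousAt (fun β => (β - 1)⁻¹ * Real.log (Zs β p r)) t := by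
    refine ContinuousAt.mul (ContinuousAt.inv₀ (continuousAt_id.sub continuousAt_const)
      (by simp [sub_eq_zero]; exact ht1.ne)) ?_
    show Tendsto (Real.log ∘ fun β => Zs β p r) (nhds t) (nhds (Real.log (Zs t p r)))
    exact Filter.Tendsto.comp (Real.continuousAt_log hZ.ne') (contAt_Zs ht0 ht1 p r)
  have hev : ∀ᶠ β in nhds t, renyiDiv β p r = (β - 1)⁻¹ * Real.log (Zs β p r) := by
    filter_upwards [eventually_ne_nhds ht1.ne] with β hβ
    exact renyiDiv_eq hβ p r
  rw [renyiDiv_eq ht1.ne p r]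
  exact hF.tendsto.congr' (by filter_upwards [hev] with β h using h.symm)

/-- Order-continuity at `1`: `D_β → KL` as `β → 1`, under absolute continuity. -/
lemma tendsto_renyiDiv_at_one {p r : Y → ℝ} (hp : IsPMF p) (hr : IsPMF r)
    (hac : ∀ y, r y = 0 → p y = 0) :
    Tendsto (fun β => renyiDiv β p r) (nhdsWithin 1 {x | x ≠ 1})
      (nhds (renyiDiv 1 p r)) := by
  set g : ℝ → ℝ := fun β => Zs β p r with hg
  set KL : ℝ := ∑ y, p y * Real.log (p y / r y) with hKL
  have hg1 : g 1 = 1 := by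
    rw [hg]
    unfold Zs
    simp only [sub_self, Real.rpow_one, Real.rpow_zero, mul_one]
    exact hp.2
  have hderiv : HasDerivAt g KL 1 := by
    rw [hKL, hg]
    simp only [Zs]
    refine HasDerivAt.fun_sum fun y _ => ?_
    rcases eq_or_lt_of_le (hp.1 y) with h0 | h0
    · have hzero : (fun β : ℝ => p y ^ β * r y ^ (1 - β)) =ᶠ[nhds 1] fun _ => 0 := by
        filter_upwards [eventually_ne_nhds one_ne_zero] with β hβ
        rw [← h0, Real.zero_rpow hβ, zero_mul]
      have h := (hasDerivAt_const (1:ℝ) (0:ℝ)).congr_of_eventuallyEq hzero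
      have hval : p y * Real.log (p y / r y) = 0 := by rw [← h0]; ring
      rw [hval]; exact h
    · have hry : 0 < r y := by
        rcases eq_or_lt_of_le (hr.1 y) with h1 | h1
        · exact absurd (hac y h1.symm) (by linarith)
        · exact h1
      have heq : (fun β : ℝ => p y ^ β * r y ^ (1 - β)) =
          fun β : ℝ => Real.exp (β * Real.log (p y) + (1 - β) * Real.log (r y)) := by
        funext β
        rw [Real.exp_add, Real.rpow_def_of_pos h0, Real.rpow_def_of_pos hry, mul_comm β,
          mul_comm (1 - β)]
      rw [heq]
      have hinner : HasDerivAt (fun β : ℝ => β * Real.log (p y) + (1 - β) * Real.log (r y))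
          (Real.log (p y) - Real.log (r y)) 1 := by
        have h1 : HasDerivAt (fun β : ℝ => β * Real.log (p y)) (Real.log (p y)) 1 := by
          simpa using (hasDerivAt_id (1:ℝ)).mul_const (Real.log (p y))
        have h2 : HasDerivAt (fun β : ℝ => (1 - β) * Real.log (r y)) (-Real.log (r y)) 1 := by
          have := ((hasDerivAt_const (1:ℝ) (1:ℝ)).sub (hasDerivAt_id (1:ℝ))).mul_const
            (Real.log (r y))
          simpa using this
        simpa [sub_eq_add_neg] using h1.fun_add h2
      have := hinner.exp
      have hsimp : Real.exp ((1:ℝ) * Real.log (p y) + (1 - 1) * Real.log (r y)) = p y := by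
        simp [Real.exp_log h0]
      rw [hsimp] at this
      have hval : p y * (Real.log (p y) - Real.log (r y)) = p y * Real.log (p y / r y) := by
        rw [Real.log_div h0.ne' hry.ne']
      rw [← hval]
      exact this
  have hlog : HasDerivAt (fun β => Real.log (g β)) KL 1 := by
    have := hderiv.log (by rw [hg1]; norm_num)
    simpa [hg1] using this
  have hslope := hasDerivAt_iff_tendsto_slope.1 hlog
  have hKL1 : renyiDiv 1 p r = KL := by rw [renyiDiv, if_pos rfl, hKL]
  rw [hKL1]
  refine hslope.congr' ?_
  filter_upwards [self_mem_nhdsWithin] with β (hβ : β ≠ 1)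
  rw [slope_def_field, renyiDiv_eq hβ p r]
  rw [show Real.log (g 1) = 0 by rw [hg1]; exact Real.log_one]
  rw [div_eq_inv_mul, sub_zero]




lemma renyiDiv_one {Y : Type*} [Fintype Y] (p r : Y → ℝ) :
    renyiDiv 1 p r = ∑ y, p y * Real.log (p y / r y) := by rw [renyiDiv, if_pos rfl]

section Channel
variable {X Y : Type*} [Fintype X] [Fintype Y]

noncomputable def Ssum (β : ℝ) (P : X → ℝ) (W : X → Y → ℝ) (y : Y) : ℝ :=
  ∑ x, P x * W x y ^ β

noncomputable def msum (β : ℝ) (P : X → ℝ) (W : X → Y → ℝ) : ℝ :=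
  ∑ y, Ssum β P W y ^ β⁻¹

variable {P : X → ℝ} {W : X → Y → ℝ}

lemma renyiMean_def (β : ℝ) (P : X → ℝ) (W : X → Y → ℝ) (y : Y) :
    renyiMean β P W y = Ssum β P W y ^ β⁻¹ / msum β P W := rfl

lemma renyiInfo_ne_one {β : ℝ} (hβ : β ≠ 1) (P : X → ℝ) (W : X → Y → ℝ) :
    renyiInfo β P W = (β / (β - 1)) * Real.log (msum β P W) := by
  rw [renyiInfo, if_neg hβ]; rfl

lemma Ssum_nonneg (β : ℝ) (hP : ∀ x, 0 ≤ P x) (hW : ∀ x y, 0 ≤ W x y) (y : Y) :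
    0 ≤ Ssum β P W y :=
  Finset.sum_nonneg fun x _ => mul_nonneg (hP x) (Real.rpow_nonneg (hW x y) _)

lemma exists_PxW_pos (hP : IsPMF P) (hWx : ∀ x, IsPMF (W x)) :
    ∃ x y, 0 < P x ∧ 0 < W x y := by
  by_contra h
  push_neg at h
  have hz : ∀ x y, P x * W x y = 0 := by
    intro x y
    rcases eq_or_lt_of_le (hP.1 x) with h0 | h0
    · rw [← h0, zero_mul]
    · have := h x y h0
      have : W x y = 0 := le_antisymm this ((hWx x).1 y)
      rw [this, mul_zero]
  have : (1:ℝ) = 0 := by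
    calc (1:ℝ) = ∑ x, P x := hP.2.symm
      _ = ∑ x, P x * ∑ y, W x y := by
          refine Finset.sum_congr rfl fun x _ => ?_
          rw [(hWx x).2, mul_one]
      _ = ∑ x, ∑ y, P x * W x y := by
          refine Finset.sum_congr rfl fun x _ => ?_
          rw [Finset.mul_sum]
      _ = 0 := Finset.sum_eq_zero fun x _ => Finset.sum_eq_zero fun y _ => hz x y
  norm_num at this

lemma exists_Ssum_pos {β : ℝ} (hβ0 : 0 < β) (hP : IsPMF P) (hWx : ∀ x, IsPMF (W x)) :
    ∃ y, 0 < Ssum β P W y := by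
  obtain ⟨x, y, hPx, hWxy⟩ := exists_PxW_pos hP hWx
  refine ⟨y, lt_of_lt_of_le (mul_pos hPx (Real.rpow_pos_of_pos hWxy β)) ?_⟩
  exact Finset.single_le_sum (fun x' _ => mul_nonneg (hP.1 x')
    (Real.rpow_nonneg ((hWx x').1 y) _)) (Finset.mem_univ x)

lemma msum_pos {β : ℝ} (hβ0 : 0 < β) (hP : IsPMF P) (hWx : ∀ x, IsPMF (W x)) :
    0 < msum β P W := by
  obtain ⟨y, hy⟩ := exists_Ssum_pos hβ0 hP hWx
  refine lt_of_lt_of_le (Real.rpow_pos_of_pos hy β⁻¹) ?_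
  exact Finset.single_le_sum (fun y' _ => Real.rpow_nonneg
    (Ssum_nonneg β hP.1 (fun x y => (hWx x).1 y) y') _) (Finset.mem_univ y)

lemma renyiMean_pmf {β : ℝ} (hβ0 : 0 < β) (hP : IsPMF P) (hWx : ∀ x, IsPMF (W x)) :
    IsPMF (renyiMean β P W) := by
  constructor
  · intro y
    rw [renyiMean_def]
    exact div_nonneg (Real.rpow_nonneg (Ssum_nonneg β hP.1 (fun x y => (hWx x).1 y) y) _)
      (msum_pos hβ0 hP hWx).le
  · have hm := msum_pos hβ0 hP hWx
    calc ∑ y, renyiMean β P W y = ∑ y, Ssum β P W y ^ β⁻¹ / msum β P W :=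
          Finset.sum_congr rfl fun y _ => renyiMean_def β P W y
      _ = (∑ y, Ssum β P W y ^ β⁻¹) / msum β P W := by rw [Finset.sum_div]
      _ = 1 := div_self hm.ne'

lemma renyiMean_ac {β : ℝ} (hβ0 : 0 < β) {y : Y} (h : ∑ x, P x * W x y = 0)
    (hP : ∀ x, 0 ≤ P x) (hW : ∀ x y, 0 ≤ W x y) : renyiMean β P W y = 0 := by
  have hz : ∀ x, P x * W x y = 0 := by
    intro x
    have := (Finset.sum_eq_zero_iff_of_nonneg fun x _ => mul_nonneg (hP x) (hW x y)).1 h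
    exact this x (Finset.mem_univ x)
  have hS : Ssum β P W y = 0 := by
    refine Finset.sum_eq_zero fun x _ => ?_
    rcases mul_eq_zero.1 (hz x) with h0 | h0
    · rw [h0, zero_mul]
    · rw [h0, Real.zero_rpow hβ0.ne', mul_zero]
  rw [renyiMean_def, hS, Real.zero_rpow (inv_ne_zero hβ0.ne'), zero_div]

/-- Sibson's identity. -/
lemma sibson_eq {β : ℝ} (hβ0 : 0 < β) (hβ1 : β < 1) (hP : IsPMF P) (hWx : ∀ x, IsPMF (W x))
    {Q : Y → ℝ} (hQ : ∀ y, 0 ≤ Q y) (hT : 0 < ∑ x, P x * Zs β (W x) Q) :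
    Zs β (renyiMean β P W) Q = (∑ x, P x * Zs β (W x) Q) / (msum β P W) ^ β ∧
    renyiInfo β P W + renyiDiv β (renyiMean β P W) Q =
      (β - 1)⁻¹ * Real.log (∑ x, P x * Zs β (W x) Q) := by
  set T : ℝ := ∑ x, P x * Zs β (W x) Q with hTdef
  set m : ℝ := msum β P W with hmdef
  have hm : 0 < m := msum_pos hβ0 hP hWx
  have hstep0 : T = ∑ y, Ssum β P W y * Q y ^ (1 - β) := by
    rw [hTdef]
    simp only [Zs, Finset.mul_sum]
    rw [Finset.sum_comm]
    refine Finset.sum_congr rfl fun y _ => ?_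
    rw [Ssum, Finset.sum_mul]
    refine Finset.sum_congr rfl fun x _ => by ring
  have hstepA : Zs β (renyiMean β P W) Q = T / m ^ β := by
    have hterm : ∀ y, renyiMean β P W y ^ β = Ssum β P W y / m ^ β := by
      intro y
      rw [renyiMean_def, Real.div_rpow (Real.rpow_nonneg (Ssum_nonneg β hP.1
        (fun x y => (hWx x).1 y) y) _) hm.le]
      congr 1
      rw [← Real.rpow_mul (Ssum_nonneg β hP.1 (fun x y => (hWx x).1 y) y),
        inv_mul_cancel₀ hβ0.ne', Real.rpow_one]
    calc Zs β (renyiMean β P W) Q = ∑ y, (Ssum β P W y / m ^ β) * Q y ^ (1 - β) := by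
          unfold Zs
          exact Finset.sum_congr rfl fun y _ => by rw [hterm y]
      _ = (∑ y, Ssum β P W y * Q y ^ (1 - β)) / m ^ β := by
          rw [Finset.sum_div]
          exact Finset.sum_congr rfl fun y _ => by ring
      _ = T / m ^ β := by rw [← hstep0]
  refine ⟨hstepA, ?_⟩
  have hmb : (0:ℝ) < m ^ β := Real.rpow_pos_of_pos hm β
  have hstepB : renyiDiv β (renyiMean β P W) Q =
      (β - 1)⁻¹ * (Real.log T - β * Real.log m) := by
    rw [renyiDiv_eq hβ1.ne, hstepA, Real.log_div hT.ne' hmb.ne', Real.log_rpow hm]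
  rw [hstepB, renyiInfo_ne_one hβ1.ne, ← hmdef, div_eq_mul_inv]
  have hβ1' : β - 1 ≠ 0 := by intro h; exact hβ1.ne (by linarith)
  field_simp
  ring

/-- Sibson bound. -/
lemma sibson_bound {β : ℝ} (hβ0 : 0 < β) (hβ1 : β < 1) (hP : IsPMF P) (hWx : ∀ x, IsPMF (W x))
    {Q : Y → ℝ} (hQ : ∀ y, 0 ≤ Q y) {c : ℝ}
    (hc : ∀ x, Real.exp ((β - 1) * c) ≤ Zs β (W x) Q) :
    renyiInfo β P W + renyiDiv β (renyiMean β P W) Q ≤ c ∧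
      0 < Zs β (renyiMean β P W) Q := by
  have hT : Real.exp ((β - 1) * c) ≤ ∑ x, P x * Zs β (W x) Q := by
    calc Real.exp ((β - 1) * c) = ∑ x, P x * Real.exp ((β - 1) * c) := by
          rw [← Finset.sum_mul, hP.2, one_mul]
      _ ≤ ∑ x, P x * Zs β (W x) Q :=
          Finset.sum_le_sum fun x _ => mul_le_mul_of_nonneg_left (hc x) (hP.1 x)
  have hT0 : 0 < ∑ x, P x * Zs β (W x) Q := lt_of_lt_of_le (Real.exp_pos _) hT
  obtain ⟨hZeq, hEq⟩ := sibson_eq hβ0 hβ1 hP hWx hQ hT0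
  constructor
  · rw [hEq]
    have hb : β - 1 < 0 := by linarith
    have h1 : (β - 1) * c ≤ Real.log (∑ x, P x * Zs β (W x) Q) := by
      calc (β - 1) * c = Real.log (Real.exp ((β - 1) * c)) := (Real.log_exp _).symm
        _ ≤ _ := Real.log_le_log (Real.exp_pos _) hT
    have h2 := mul_le_mul_of_nonpos_left h1 (inv_nonpos.2 hb.le)
    rwa [← mul_assoc, inv_mul_cancel₀ hb.ne, one_mul] at h2
  · rw [hZeq]
    exact div_pos hT0 (Real.rpow_pos_of_pos (msum_pos hβ0 hP hWx) β)

end Channel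

section Channel2
variable {X Y : Type*} [Fintype X] [Fintype Y] {P : X → ℝ} {W : X → Y → ℝ}

/-- The output distribution `PW`. -/
noncomputable def outDist (P : X → ℝ) (W : X → Y → ℝ) : Y → ℝ := fun y => ∑ x, P x * W x y

lemma outDist_pmf (hP : IsPMF P) (hWx : ∀ x, IsPMF (W x)) : IsPMF (outDist P W) := by
  constructor
  · exact fun y => Finset.sum_nonneg fun x _ => mul_nonneg (hP.1 x) ((hWx x).1 y)
  · calc ∑ y, outDist P W y = ∑ y, ∑ x, P x * W x y := rfl
      _ = ∑ x, ∑ y, P x * W x y := Finset.sum_comm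
      _ = ∑ x, P x * ∑ y, W x y :=
          Finset.sum_congr rfl fun x _ => (Finset.mul_sum _ _ _).symm
      _ = 1 := by
          rw [← hP.2]
          exact Finset.sum_congr rfl fun x _ => by rw [(hWx x).2, mul_one]

lemma single_le_outDist (hP : ∀ x, 0 ≤ P x) (hW : ∀ x y, 0 ≤ W x y) (x : X) (y : Y) :
    P x * W x y ≤ outDist P W y :=
  Finset.single_le_sum (fun x' _ => mul_nonneg (hP x') (hW x' y)) (Finset.mem_univ x)

/-- Sibson-type bound at order 1. -/
lemma sibson_one (hP : IsPMF P) (hWx : ∀ x, IsPMF (W x)) {Q : Y → ℝ} (hQ : IsPMF Q)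
    (hac : ∀ x y, Q y = 0 → W x y = 0) :
    renyiInfo 1 P W ≤ ∑ x, P x * renyiDiv 1 (W x) Q := by
  set PW : Y → ℝ := outDist P W with hPWdef
  have hPWpmf : IsPMF PW := outDist_pmf hP hWx
  have key : ∑ x, P x * renyiDiv 1 (W x) Q - renyiInfo 1 P W = renyiDiv 1 PW Q := by
    have h1 : ∀ x y, P x * (W x y * Real.log (W x y / Q y)) -
        P x * (W x y * Real.log (W x y / PW y)) =
        P x * W x y * (Real.log (PW y) - Real.log (Q y)) := by
      intro x y
      rcases eq_or_lt_of_le (hP.1 x) with h0 | h0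
      · rw [← h0]; ring
      rcases eq_or_lt_of_le ((hWx x).1 y) with hw | hw
      · rw [← hw]; ring
      have hQy : 0 < Q y := by
        rcases eq_or_lt_of_le (hQ.1 y) with h2 | h2
        · exact absurd (hac x y h2.symm) (by linarith)
        · exact h2
      have hPWy : 0 < PW y :=
        lt_of_lt_of_le (mul_pos h0 hw) (single_le_outDist hP.1 (fun x y => (hWx x).1 y) x y)
      rw [Real.log_div hw.ne' hQy.ne', Real.log_div hw.ne' hPWy.ne']
      ring
    have h3 : ∀ y, PW y * (Real.log (PW y) - Real.log (Q y)) = PW y * Real.log (PW y / Q y) := by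
      intro y
      rcases eq_or_lt_of_le (hPWpmf.1 y) with h0 | h0
      · rw [← h0]; ring
      have hQy : 0 < Q y := by
        rcases eq_or_lt_of_le (hQ.1 y) with h2 | h2
        · exfalso
          have hz : PW y = 0 := by
            rw [hPWdef]
            unfold outDist
            exact Finset.sum_eq_zero fun x _ => by rw [hac x y h2.symm, mul_zero]
          rw [hz] at h0; exact lt_irrefl _ h0
        · exact h2
      rw [Real.log_div h0.ne' hQy.ne']
    have hInfo : renyiInfo 1 P W = ∑ x, P x * ∑ y, W x y * Real.log (W x y / PW y) := by
      rw [renyiInfo, if_pos rfl]; rfl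
    calc ∑ x, P x * renyiDiv 1 (W x) Q - renyiInfo 1 P W
        = ∑ x, ∑ y, (P x * (W x y * Real.log (W x y / Q y)) -
            P x * (W x y * Real.log (W x y / PW y))) := by
          rw [hInfo, ← Finset.sum_sub_distrib]
          refine Finset.sum_congr rfl fun x _ => ?_
          rw [renyiDiv_one, Finset.mul_sum, Finset.mul_sum, ← Finset.sum_sub_distrib]
      _ = ∑ y, ∑ x, P x * W x y * (Real.log (PW y) - Real.log (Q y)) := by
          rw [Finset.sum_comm]
          exact Finset.sum_congr rfl fun y _ => Finset.sum_congr rfl fun x _ => h1 x y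
      _ = ∑ y, PW y * (Real.log (PW y) - Real.log (Q y)) := by
          refine Finset.sum_congr rfl fun y _ => ?_
          rw [← Finset.sum_mul]
          rfl
      _ = ∑ y, PW y * Real.log (PW y / Q y) := Finset.sum_congr rfl fun y _ => h3 y
      _ = renyiDiv 1 PW Q := (renyiDiv_one _ _).symm
  have hKL : 0 ≤ renyiDiv 1 PW Q := by
    refine gibbs hPWpmf hQ fun y hy => ?_
    exact Finset.sum_eq_zero fun x _ => by rw [hac x y hy, mul_zero]
  linarith [key]

end Channel2

section Channel3
variable {X Y : Type*} [Fintype X] [Fintype Y] {P : X → ℝ} {W : X → Y → ℝ}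

lemma Ssum_zero_forall {β α' : ℝ} (hβ0 : 0 < β) (hα0 : 0 < α') {y : Y}
    (hP : ∀ x, 0 ≤ P x) (hW : ∀ x y, 0 ≤ W x y)
    (h : Ssum α' P W y = 0) : Ssum β P W y = 0 := by
  have hz := (Finset.sum_eq_zero_iff_of_nonneg fun x _ =>
    mul_nonneg (hP x) (Real.rpow_nonneg (hW x y) _)).1 h
  refine Finset.sum_eq_zero fun x _ => ?_
  rcases mul_eq_zero.1 (hz x (Finset.mem_univ x)) with h0 | h0
  · rw [h0, zero_mul]
  · have hWxy : W x y = 0 := by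
      have := Real.rpow_eq_zero_iff_of_nonneg (hW x y) |>.1 h0
      exact this.1
    rw [hWxy, Real.zero_rpow hβ0.ne', mul_zero]

lemma contAt_Ssum {t : ℝ} (ht0 : 0 < t) (hW : ∀ x y, 0 ≤ W x y) (y : Y) :
    ContinuousAt (fun β => Ssum β P W y) t := by
  unfold Ssum
  refine tendsto_finset_sum _ fun x _ => ContinuousAt.mul continuousAt_const ?_
  rcases eq_or_ne (W x y) 0 with h | h
  · exact contAt_rpow_exponent continuousAt_id (Or.inr (by simpa using ht0))
  · exact contAt_rpow_exponent continuousAt_id (Or.inl h)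

lemma contAt_Ssum_rpow_inv {t : ℝ} (ht0 : 0 < t) (hW : ∀ x y, 0 ≤ W x y) (y : Y) :
    ContinuousAt (fun β => Ssum β P W y ^ β⁻¹) t := by
  have hpair : ContinuousAt (fun β : ℝ => ((Ssum β P W y, β⁻¹) : ℝ × ℝ)) t :=
    ContinuousAt.prodMk (contAt_Ssum ht0 hW y) (continuousAt_id.inv₀ ht0.ne')
  show Tendsto ((fun p : ℝ × ℝ => p.1 ^ p.2) ∘ fun β : ℝ => (Ssum β P W y, β⁻¹)) (nhds t)
    (nhds (Ssum t P W y ^ t⁻¹))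
  exact Filter.Tendsto.comp
    (Real.continuousAt_rpow (Ssum t P W y, t⁻¹) (Or.inr (by positivity))) hpair

lemma contAt_msum {t : ℝ} (ht0 : 0 < t) (hW : ∀ x y, 0 ≤ W x y) :
    ContinuousAt (fun β => msum β P W) t := by
  unfold msum
  exact tendsto_finset_sum _ fun y _ => contAt_Ssum_rpow_inv ht0 hW y

/-- Continuity of `β ↦ I_β(P;W)` at `t ∈ (0,1)`. -/
lemma tendsto_renyiInfo_of_lt_one {t : ℝ} (ht0 : 0 < t) (ht1 : t < 1)
    (hP : IsPMF P) (hWx : ∀ x, IsPMF (W x)) :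
    Tendsto (fun β => renyiInfo β P W) (nhds t) (nhds (renyiInfo t P W)) := by
  have hW : ∀ x y, 0 ≤ W x y := fun x y => (hWx x).1 y
  have hm : 0 < msum t P W := msum_pos ht0 hP hWx
  have hG : ContinuousAt (fun β => (β / (β - 1)) * Real.log (msum β P W)) t := by
    refine ContinuousAt.mul (ContinuousAt.div continuousAt_id
      (continuousAt_id.sub continuousAt_const) (by simp [sub_eq_zero]; exact ht1.ne)) ?_
    show Tendsto (Real.log ∘ fun β => msum β P W) (nhds t) (nhds (Real.log (msum t P W)))
    exact Filter.Tendsto.comp (Real.continuousAt_log hm.ne') (contAt_msum ht0 hW)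
  have hev : ∀ᶠ β in nhds t, renyiInfo β P W = (β / (β - 1)) * Real.log (msum β P W) := by
    filter_upwards [eventually_ne_nhds ht1.ne] with β hβ
    exact renyiInfo_ne_one hβ P W
  rw [renyiInfo_ne_one ht1.ne P W]
  exact hG.tendsto.congr' (by filter_upwards [hev] with β h using h.symm)

/-- Continuity of `β ↦ I_β(P;W)` at `1` (from the left). -/
lemma tendsto_renyiInfo_at_one (hP : IsPMF P) (hWx : ∀ x, IsPMF (W x)) :
    Tendsto (fun β => renyiInfo β P W) (nhdsWithin 1 (Set.Ioo (0:ℝ) 1))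
      (nhds (renyiInfo 1 P W)) := by
  classical
  have hW : ∀ x y, 0 ≤ W x y := fun x y => (hWx x).1 y
  set PW : Y → ℝ := outDist P W with hPWdef
  have hPWpmf : IsPMF PW := outDist_pmf hP hWx
  -- the joint distributions
  set jp : X × Y → ℝ := fun z => P z.1 * W z.1 z.2 with hjp
  set jr : X × Y → ℝ := fun z => P z.1 * PW z.2 with hjr
  have hjp_pmf : IsPMF jp := by
    constructor
    · exact fun z => mul_nonneg (hP.1 z.1) (hW z.1 z.2)
    · rw [hjp]
      rw [Fintype.sum_prod_type]
      calc ∑ x, ∑ y, P x * W x y = ∑ x, P x * ∑ y, W x y :=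
            Finset.sum_congr rfl fun x _ => (Finset.mul_sum _ _ _).symm
        _ = 1 := by
            rw [← hP.2]
            exact Finset.sum_congr rfl fun x _ => by rw [(hWx x).2, mul_one]
  have hjr_pmf : IsPMF jr := by
    constructor
    · exact fun z => mul_nonneg (hP.1 z.1) (hPWpmf.1 z.2)
    · rw [hjr]
      rw [Fintype.sum_prod_type]
      calc ∑ x, ∑ y, P x * PW y = ∑ x, P x * ∑ y, PW y :=
            Finset.sum_congr rfl fun x _ => (Finset.mul_sum _ _ _).symm
        _ = ∑ x, P x := Finset.sum_congr rfl fun x _ => by rw [hPWpmf.2, mul_one]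
        _ = 1 := hP.2
  have hjac : ∀ z, jr z = 0 → jp z = 0 := by
    rintro ⟨x, y⟩ h
    rcases mul_eq_zero.1 h with h0 | h0
    · rw [hjp]; simp only; rw [h0, zero_mul]
    · have hle := single_le_outDist hP.1 hW x y
      have hle0 : P x * W x y ≤ 0 := by
        calc P x * W x y ≤ outDist P W y := hle
          _ = 0 := h0
      have hz : P x * W x y = 0 := le_antisymm hle0 (mul_nonneg (hP.1 x) (hW x y))
      rw [hjp]; simpa using hz
  -- `Zs β jp jr = T β`
  have hjZ : ∀ β : ℝ, 0 < β → β < 1 → Zs β jp jr = ∑ x, P x * Zs β (W x) PW := by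
    intro β hβ0 hβ1
    unfold Zs
    rw [Fintype.sum_prod_type]
    refine Finset.sum_congr rfl fun x _ => ?_
    rw [Finset.mul_sum]
    refine Finset.sum_congr rfl fun y _ => ?_
    show jp (x, y) ^ β * jr (x, y) ^ (1 - β) = P x * (W x y ^ β * PW y ^ (1 - β))
    rw [hjp, hjr]
    simp only
    rw [Real.mul_rpow (hP.1 x) (hW x y), Real.mul_rpow (hP.1 x) (hPWpmf.1 y)]
    rcases eq_or_lt_of_le (hP.1 x) with h0 | h0
    · rw [← h0, Real.zero_rpow hβ0.ne', Real.zero_rpow (by linarith : (1:ℝ) - β ≠ 0)]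
      ring
    · have : P x ^ β * P x ^ (1 - β) = P x := by
        rw [← Real.rpow_add h0]; norm_num
      calc P x ^ β * W x y ^ β * (P x ^ (1 - β) * PW y ^ (1 - β))
          = (P x ^ β * P x ^ (1 - β)) * (W x y ^ β * PW y ^ (1 - β)) := by ring
        _ = P x * (W x y ^ β * PW y ^ (1 - β)) := by rw [this]
  -- positivity of T β
  have hT : ∀ β : ℝ, 0 < β → β < 1 → 0 < ∑ x, P x * Zs β (W x) PW := by
    intro β hβ0 hβ1
    obtain ⟨x, y, hPx, hWxy⟩ := exists_PxW_pos hP hWx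
    have hPWy : 0 < PW y := lt_of_lt_of_le (mul_pos hPx hWxy) (single_le_outDist hP.1 hW x y)
    have hZx : 0 < Zs β (W x) PW := Zs_pos hβ0 hβ1 (hW x) hPWpmf.1 ⟨y, hWxy, hPWy⟩
    refine lt_of_lt_of_le (mul_pos hPx hZx) ?_
    exact Finset.single_le_sum (fun x' _ => mul_nonneg (hP.1 x')
      (Zs_nonneg (hW x') hPWpmf.1)) (Finset.mem_univ x)
  -- the identity on `Ioo 0 1`
  have hident : ∀ β ∈ Set.Ioo (0:ℝ) 1,
      renyiInfo β P W = renyiDiv β jp jr - renyiDiv β (renyiMean β P W) PW := by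
    intro β hβ
    obtain ⟨hEq1, hEq2⟩ := sibson_eq hβ.1 hβ.2 hP hWx hPWpmf.1 (hT β hβ.1 hβ.2)
    have : renyiDiv β jp jr = (β - 1)⁻¹ * Real.log (∑ x, P x * Zs β (W x) PW) := by
      rw [renyiDiv_eq hβ.2.ne, hjZ β hβ.1 hβ.2]
    rw [this, ← hEq2]
    ring
  -- limit of the first term
  have hKLI : renyiDiv 1 jp jr = renyiInfo 1 P W := by
    rw [renyiDiv_one, renyiInfo, if_pos rfl]
    rw [Fintype.sum_prod_type]
    refine Finset.sum_congr rfl fun x _ => ?_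
    rw [Finset.mul_sum]
    refine Finset.sum_congr rfl fun y _ => ?_
    show jp (x, y) * Real.log (jp (x, y) / jr (x, y)) =
      P x * (W x y * Real.log (W x y / (∑ x', P x' * W x' y)))
    rw [hjp, hjr]
    simp only
    rcases eq_or_lt_of_le (hP.1 x) with h0 | h0
    · rw [← h0]; ring
    · have hdiv : P x * W x y / (P x * PW y) = W x y / PW y := by
        rw [mul_div_mul_left _ _ h0.ne']
      rw [hdiv, hPWdef]
      show P x * W x y * Real.log (W x y / outDist P W y) =
        P x * (W x y * Real.log (W x y / (∑ x', P x' * W x' y)))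
      rw [outDist]
      ring
  have hlim1 : Tendsto (fun β => renyiDiv β jp jr) (nhdsWithin 1 (Set.Ioo (0:ℝ) 1))
      (nhds (renyiInfo 1 P W)) := by
    rw [← hKLI]
    refine (tendsto_renyiDiv_at_one hjp_pmf hjr_pmf hjac).mono_left ?_
    exact nhdsWithin_mono _ fun β hβ => ne_of_lt hβ.2
  -- limit of the second term
  have hmean_lim : ∀ y, Tendsto (fun β => renyiMean β P W y) (nhds 1) (nhds (PW y)) := by
    intro y
    have hnum : ContinuousAt (fun β => Ssum β P W y ^ β⁻¹) 1 :=
      contAt_Ssum_rpow_inv one_pos hW y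
    have hden : ContinuousAt (fun β => msum β P W) 1 := contAt_msum one_pos hW
    have hden1 : msum 1 P W = 1 := by
      unfold msum
      calc ∑ y', Ssum 1 P W y' ^ (1:ℝ)⁻¹ = ∑ y', PW y' := by
            refine Finset.sum_congr rfl fun y' _ => ?_
            rw [inv_one, Real.rpow_one]
            unfold Ssum
            exact Finset.sum_congr rfl fun x _ => by rw [Real.rpow_one]
        _ = 1 := hPWpmf.2
    have hnum1 : Ssum 1 P W y ^ (1:ℝ)⁻¹ = PW y := by
      rw [inv_one, Real.rpow_one]
      unfold Ssum
      exact Finset.sum_congr rfl fun x _ => by rw [Real.rpow_one]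
    have hne : msum 1 P W ≠ 0 := by rw [hden1]; norm_num
    have h2 : Tendsto (fun β => Ssum β P W y ^ β⁻¹ / msum β P W) (nhds 1)
        (nhds (Ssum 1 P W y ^ (1:ℝ)⁻¹ / msum 1 P W)) := hnum.div hden hne
    rw [hnum1, hden1, div_one] at h2
    exact h2.congr fun β => (renyiMean_def β P W y).symm
  have hK_lim : Tendsto (fun β => renyiDiv 1 (renyiMean β P W) PW)
      (nhdsWithin 1 (Set.Ioo (0:ℝ) 1)) (nhds 0) := by
    have heach : ∀ y, Tendsto (fun β => renyiMean β P W y *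
        Real.log (renyiMean β P W y / PW y)) (nhdsWithin 1 (Set.Ioo (0:ℝ) 1)) (nhds 0) := by
      intro y
      rcases eq_or_lt_of_le (hPWpmf.1 y) with h0 | h0
      · have hev : ∀ᶠ β in nhdsWithin 1 (Set.Ioo (0:ℝ) 1),
            renyiMean β P W y * Real.log (renyiMean β P W y / PW y) = 0 := by
          filter_upwards [self_mem_nhdsWithin] with β hβ
          have : renyiMean β P W y = 0 := renyiMean_ac hβ.1 (h0 ▸ rfl : outDist P W y = 0)
            hP.1 hW
          rw [this, zero_mul]
        exact Tendsto.congr' (by filter_upwards [hev] with β h using h.symm) tendsto_const_nhds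
      · have hcont : ContinuousAt (fun u : ℝ => u * Real.log (u / PW y)) (PW y) := by
          refine ContinuousAt.mul continuousAt_id ?_
          show Tendsto (Real.log ∘ fun u : ℝ => u / PW y) (nhds (PW y))
            (nhds (Real.log (PW y / PW y)))
          refine Filter.Tendsto.comp (Real.continuousAt_log ?_) (continuousAt_id.div
            continuousAt_const h0.ne')
          rw [div_self h0.ne']; norm_num
        have := Filter.Tendsto.comp hcont.tendsto
          ((hmean_lim y).mono_left (nhdsWithin_le_nhds (s := Set.Ioo (0:ℝ) 1)))
        have hval : PW y * Real.log (PW y / PW y) = 0 := by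
          rw [div_self h0.ne', Real.log_one, mul_zero]
        rw [hval] at this
        exact this
    have hsum := tendsto_finset_sum Finset.univ (fun y _ => heach y)
    simp only [Finset.sum_const_zero] at hsum
    refine Tendsto.congr' ?_ hsum
    filter_upwards with β
    rw [renyiDiv_one]
  -- squeeze the second term to 0
  have hlim2 : Tendsto (fun β => renyiDiv β (renyiMean β P W) PW)
      (nhdsWithin 1 (Set.Ioo (0:ℝ) 1)) (nhds 0) := by
    refine tendsto_of_tendsto_of_tendsto_of_le_of_le' tendsto_const_nhds hK_lim ?_ ?_
    · filter_upwards [self_mem_nhdsWithin] with β hβ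
      exact renyiDiv_nonneg hβ.1 hβ.2 (renyiMean_pmf hβ.1 hP hWx) hPWpmf
    · filter_upwards [self_mem_nhdsWithin] with β hβ
      refine renyiDiv_le_KL hβ.1 hβ.2 (renyiMean_pmf hβ.1 hP hWx) hPWpmf.1 fun y hy => ?_
      exact renyiMean_ac hβ.1 hy hP.1 hW
  have := hlim1.sub hlim2
  rw [sub_zero] at this
  refine Tendsto.congr' ?_ this
  filter_upwards [self_mem_nhdsWithin] with β hβ
  exact (hident β hβ).symm

end Channel3
end RCaux

open RCaux

/-- the Rényi center is continuous in the order on `(0,1]` with respect to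
the total variation distance. -/
theorem renyiCenter_continuous {X Y : Type*} [Fintype X] [Fintype Y] [Nonempty X]
    (W : X → Y → ℝ) (hW : ∀ x, IsPMF (W x)) (q : ℝ → Y → ℝ)
    (hq : ∀ α ∈ Set.Ioc (0:ℝ) 1, IsPMF (q α) ∧
      (⨆ x, renyiDivE α (W x) (q α)) = ENNReal.ofReal (renyiCap α W)) :
    ∀ α ∈ Set.Ioc (0:ℝ) 1,
      Filter.Tendsto (fun β => ∑ y, |q β y - q α y|)
        (nhdsWithin α (Set.Ioc 0 1)) (nhds 0) := by
  classical
  intro α hα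
  have hα0 : 0 < α := hα.1
  have hα1 : α ≤ 1 := hα.2
  -- notation for the capacity set
  set CS : ℝ → Set ℝ := fun β => {c | ∃ P : X → ℝ, IsPMF P ∧ c = renyiInfo β P W} with hCSdef
  have hcap : ∀ β, renyiCap β W = sSup (CS β) := fun β => rfl
  -- pmf facts
  have hqpmf : ∀ β ∈ Set.Ioc (0:ℝ) 1, IsPMF (q β) := fun β hβ => (hq β hβ).1
  have hfin : ∀ β ∈ Set.Ioc (0:ℝ) 1, ∀ x,
      renyiDivE β (W x) (q β) ≤ ENNReal.ofReal (renyiCap β W) := by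
    intro β hβ x
    rw [← (hq β hβ).2]
    exact le_iSup (fun x => renyiDivE β (W x) (q β)) x
  -- positivity of Z for centers, β ≠ 1
  have hZqpos : ∀ β ∈ Set.Ioc (0:ℝ) 1, β ≠ 1 → ∀ x, 0 < Zs β (W x) (q β) := by
    intro β hβ hβ1 x
    by_contra hc
    have heval : renyiDivE β (W x) (q β) = ⊤ := by
      rw [renyiDivE, if_neg hβ1, if_neg]
      exact hc
    have := hfin β hβ x
    rw [heval] at this
    exact ENNReal.ofReal_ne_top (top_le_iff.1 this)
  have hDE : ∀ β ∈ Set.Ioc (0:ℝ) 1, β ≠ 1 → ∀ x,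
      renyiDivE β (W x) (q β) = ENNReal.ofReal (renyiDiv β (W x) (q β)) := by
    intro β hβ hβ1 x
    rw [renyiDivE, if_neg hβ1, if_pos]
    exact hZqpos β hβ hβ1 x
  -- absolute continuity at order 1
  have hAC1 : (1:ℝ) ∈ Set.Ioc (0:ℝ) 1 → ∀ x, ∀ y, q 1 y = 0 → W x y = 0 := by
    intro h1 x
    by_contra hc
    have heval : renyiDivE 1 (W x) (q 1) = ⊤ := by
      rw [renyiDivE, if_pos rfl, if_neg]
      exact hc
    have := hfin 1 h1 x
    rw [heval] at this
    exact ENNReal.ofReal_ne_top (top_le_iff.1 this)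
  -- 0 is an achievable information value
  have hzero_mem : ∀ β : ℝ, 0 < β → (0:ℝ) ∈ CS β := by
    intro β hβ0
    obtain ⟨x0⟩ := ‹Nonempty X›
    set P : X → ℝ := fun x => if x = x0 then (1:ℝ) else 0 with hPdef
    have hPpmf : IsPMF P := by
      constructor
      · intro x; rw [hPdef]; dsimp only; split <;> norm_num
      · rw [hPdef]; simp
    refine ⟨P, hPpmf, ?_⟩
    have hSsum : ∀ γ : ℝ, ∀ y, (∑ x, P x * W x y ^ γ) = W x0 y ^ γ := by
      intro γ y
      rw [hPdef]
      simp [ite_mul]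
    rcases eq_or_ne β 1 with hβ1 | hβ1
    · subst hβ1
      rw [renyiInfo, if_pos rfl]
      symm
      refine Finset.sum_eq_zero fun x _ => ?_
      rcases eq_or_ne x x0 with hx | hx
      · subst hx
        have hinner : ∀ y, ∑ x', P x' * W x' y = W x y := by
          intro y
          have := hSsum 1 y
          simpa [Real.rpow_one] using this
        have : ∑ y, W x y * Real.log (W x y / (∑ x', P x' * W x' y)) = 0 := by
          refine Finset.sum_eq_zero fun y _ => ?_
          rw [hinner y]
          rcases eq_or_ne (W x y) 0 with h0 | h0
          · rw [h0, zero_mul]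
          · rw [div_self h0, Real.log_one, mul_zero]
        rw [this, mul_zero]
      · have : P x = 0 := by rw [hPdef]; simp [hx]
        rw [this, zero_mul]
    · rw [renyiInfo, if_neg hβ1]
      have : ∑ y, (∑ x, P x * W x y ^ β) ^ β⁻¹ = 1 := by
        calc ∑ y, (∑ x, P x * W x y ^ β) ^ β⁻¹ = ∑ y, W x0 y := by
              refine Finset.sum_congr rfl fun y _ => ?_
              rw [hSsum β y, ← Real.rpow_mul ((hW x0).1 y), mul_inv_cancel₀ hβ0.ne',
                Real.rpow_one]
          _ = 1 := (hW x0).2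
      rw [this, Real.log_one, mul_zero]
  have hCSne : ∀ β : ℝ, 0 < β → (CS β).Nonempty := fun β hβ => ⟨0, hzero_mem β hβ⟩
  -- the per-β capacity package
  have pack : ∀ β ∈ Set.Ioc (0:ℝ) 1, BddAbove (CS β) ∧ 0 ≤ renyiCap β W ∧
      ∀ x, renyiDiv β (W x) (q β) ≤ renyiCap β W := by
    intro β hβ
    have hβ0 : 0 < β := hβ.1
    rcases eq_or_ne β 1 with hβ1 | hβ1
    · subst hβ1
      have hac := hAC1 hβ
      have hKL0 : ∀ x, 0 ≤ renyiDiv 1 (W x) (q 1) := fun x =>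
        gibbs (hW x) (hqpmf 1 hβ) (hac x)
      set B : ℝ := Finset.univ.sup' Finset.univ_nonempty
        (fun x => renyiDiv 1 (W x) (q 1)) with hBdef
      have hxB : ∀ x, renyiDiv 1 (W x) (q 1) ≤ B := fun x =>
        Finset.le_sup' (f := fun x => renyiDiv 1 (W x) (q 1)) (Finset.mem_univ x)
      have hbdd : BddAbove (CS 1) := by
        refine ⟨B, fun c hc => ?_⟩
        obtain ⟨P, hPpmf, rfl⟩ := hc
        calc renyiInfo 1 P W ≤ ∑ x, P x * renyiDiv 1 (W x) (q 1) :=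
              sibson_one hPpmf hW (hqpmf 1 hβ) fun x y h => hac x y h
          _ ≤ ∑ x, P x * B := Finset.sum_le_sum fun x _ =>
              mul_le_mul_of_nonneg_left (hxB x) (hPpmf.1 x)
          _ = B := by rw [← Finset.sum_mul, hPpmf.2, one_mul]
      have hC0 : 0 ≤ renyiCap 1 W := by
        rw [hcap]
        exact le_csSup hbdd (hzero_mem 1 one_pos)
      refine ⟨hbdd, hC0, fun x => ?_⟩
      have h1 := hfin 1 hβ x
      rw [renyiDivE, if_pos rfl, if_pos (hac x)] at h1
      exact (ENNReal.ofReal_le_ofReal_iff hC0).1 h1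
    · have hβlt : β < 1 := lt_of_le_of_ne hβ.2 hβ1
      have hD0 : ∀ x, 0 ≤ renyiDiv β (W x) (q β) := fun x =>
        renyiDiv_nonneg hβ0 hβlt (hW x) (hqpmf β hβ)
      set B : ℝ := Finset.univ.sup' Finset.univ_nonempty
        (fun x => renyiDiv β (W x) (q β)) with hBdef
      have hxB : ∀ x, renyiDiv β (W x) (q β) ≤ B := fun x =>
        Finset.le_sup' (f := fun x => renyiDiv β (W x) (q β)) (Finset.mem_univ x)
      have hcB : ∀ x, Real.exp ((β - 1) * B) ≤ Zs β (W x) (q β) := by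
        intro x
        refine exp_le_Zs hβlt (hZqpos β hβ hβ1 x) ?_
        rw [← renyiDiv_eq hβ1]
        exact hxB x
      have hbdd : BddAbove (CS β) := by
        refine ⟨B, fun c hc => ?_⟩
        obtain ⟨P, hPpmf, rfl⟩ := hc
        obtain ⟨hIB, _⟩ := sibson_bound hβ0 hβlt hPpmf hW (hqpmf β hβ).1 hcB
        have hD := renyiDiv_nonneg hβ0 hβlt (renyiMean_pmf hβ0 hPpmf hW) (hqpmf β hβ)
        linarith
      have hC0 : 0 ≤ renyiCap β W := by
        rw [hcap]
        exact le_csSup hbdd (hzero_mem β hβ0)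
      refine ⟨hbdd, hC0, fun x => ?_⟩
      have h1 := hfin β hβ x
      rw [hDE β hβ hβ1 x] at h1
      exact (ENNReal.ofReal_le_ofReal_iff hC0).1 h1
  -- support points of each row inside supp (q α)
  have hsupp : ∀ x, ∃ y, 0 < W x y ∧ 0 < q α y := by
    intro x
    rcases eq_or_ne α 1 with hαe | hαe
    · have hac := hAC1 (hαe ▸ hα) x
      obtain ⟨y, hy⟩ : ∃ y, 0 < W x y := by
        by_contra hcon
        push_neg at hcon
        have : ∑ y, W x y = 0 :=
          Finset.sum_eq_zero fun y _ => le_antisymm (hcon y) ((hW x).1 y)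
        rw [(hW x).2] at this; norm_num at this
      refine ⟨y, hy, ?_⟩
      rcases eq_or_lt_of_le ((hqpmf α hα).1 y) with h0 | h0
      · exfalso
        have hq0 : q 1 y = 0 := by rw [← hαe]; exact h0.symm
        have := hac y hq0
        linarith
      · exact h0
    · have hαlt : α < 1 := lt_of_le_of_ne hα1 hαe
      exact exists_pos_of_Zs_pos hα0 hαlt (hW x).1 (hqpmf α hα).1 (hZqpos α hα hαe x)
  have hZqα : ∀ x, ∀ β : ℝ, 0 < β → β < 1 → 0 < Zs β (W x) (q α) := fun x β h0 h1 =>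
    Zs_pos h0 h1 (hW x).1 (hqpmf α hα).1 (hsupp x)
  -- reduce to an ε-statement
  rw [Metric.tendsto_nhds]
  intro ε hε
  set s : ℝ := α / 2 with hsdef
  have hs0 : 0 < s := by rw [hsdef]; linarith
  have hs1 : s < 1 := by rw [hsdef]; linarith
  have hsα : s < α := by rw [hsdef]; linarith
  obtain ⟨η, hη0, hη1, hηtv⟩ := tv_lemma (Y := Y) hs0 hs1 (half_pos hε)
  have hlogneg : Real.log (1 - η) < 0 := Real.log_neg (by linarith) (by linarith)
  set δ : ℝ := (-Real.log (1 - η)) / (4 * (1 - s)) with hδdef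
  have hδ0 : 0 < δ := by
    rw [hδdef]
    have h4 : (0:ℝ) < 4 * (1 - s) := by nlinarith
    exact div_pos (by linarith) h4
  have hkey : ∀ d : ℝ, 0 ≤ d → d ≤ 3 * δ → 1 - η < Real.exp ((s - 1) * d) := by
    intro d hd0 hd3
    have h1 : (s - 1) * (3 * δ) ≤ (s - 1) * d := mul_le_mul_of_nonpos_left hd3 (by linarith)
    have h2 : (s - 1) * (3 * δ) = (3 / 4) * Real.log (1 - η) := by
      rw [hδdef]
      have : (1:ℝ) - s ≠ 0 := by linarith
      field_simp
      ring
    have h3 : Real.log (1 - η) < (s - 1) * d :=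
      lt_of_lt_of_le (by rw [h2]; linarith) h1
    calc 1 - η = Real.exp (Real.log (1 - η)) := (Real.exp_log (by linarith)).symm
      _ < Real.exp ((s - 1) * d) := Real.exp_lt_exp.2 h3
  -- near-optimal input at α
  obtain ⟨c₀, hc₀mem, hc₀⟩ := exists_lt_of_lt_csSup (hCSne α hα0)
    (show renyiCap α W - δ < sSup (CS α) by rw [← hcap]; linarith)
  obtain ⟨P₀, hP₀pmf, hc₀eq⟩ := hc₀mem
  rw [hc₀eq] at hc₀
  -- eventual bounds along the punctured filter
  have hE1' : ∀ᶠ β in nhdsWithin α (Set.Ioo (0:ℝ) 1), ∀ x,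
      renyiDiv β (W x) (q α) < renyiCap α W + δ := by
    rw [eventually_all]
    intro x
    have hDle : renyiDiv α (W x) (q α) ≤ renyiCap α W := (pack α hα).2.2 x
    have hlt : renyiDiv α (W x) (q α) < renyiCap α W + δ := by linarith
    rcases eq_or_ne α 1 with hαe | hαe
    · have hac := hAC1 (hαe ▸ hα) x
      have htd := tendsto_renyiDiv_at_one (hW x) (hqpmf α hα) (by rw [hαe]; exact hac)
      have htd' : Tendsto (fun β => renyiDiv β (W x) (q α)) (nhdsWithin α (Set.Ioo (0:ℝ) 1))
          (nhds (renyiDiv α (W x) (q α))) := by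
        rw [hαe] at *
        exact htd.mono_left (nhdsWithin_mono _ fun β hβ => ne_of_lt hβ.2)
      exact htd'.eventually_lt_const hlt
    · have hαlt : α < 1 := lt_of_le_of_ne hα1 hαe
      have htd := tendsto_renyiDiv_of_lt_one hα0 hαlt (hZqα x α hα0 hαlt)
      exact (htd.mono_left nhdsWithin_le_nhds).eventually_lt_const hlt
  have hE2' : ∀ᶠ β in nhdsWithin α (Set.Ioo (0:ℝ) 1),
      renyiCap α W - δ < renyiInfo β P₀ W := by
    rcases eq_or_ne α 1 with hαe | hαe
    · have htd := tendsto_renyiInfo_at_one hP₀pmf hW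
      have htd' : Tendsto (fun β => renyiInfo β P₀ W) (nhdsWithin α (Set.Ioo (0:ℝ) 1))
          (nhds (renyiInfo α P₀ W)) := by rw [hαe] at *; exact htd
      exact htd'.eventually_const_lt hc₀
    · have hαlt : α < 1 := lt_of_le_of_ne hα1 hαe
      have htd := tendsto_renyiInfo_of_lt_one hα0 hαlt hP₀pmf hW
      exact (htd.mono_left nhdsWithin_le_nhds).eventually_const_lt hc₀
  have hEs' : ∀ᶠ β in nhdsWithin α (Set.Ioo (0:ℝ) 1), s < β :=
    (eventually_gt_nhds hsα).filter_mono nhdsWithin_le_nhds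
  have hBIG' : ∀ᶠ β in nhdsWithin α (Set.Ioo (0:ℝ) 1), β ∈ Set.Ioo (0:ℝ) 1 ∧ s < β ∧
      (∀ x, renyiDiv β (W x) (q α) < renyiCap α W + δ) ∧
      renyiCap α W - δ < renyiInfo β P₀ W :=
    ((eventually_mem_nhdsWithin.and hEs').and (hE1'.and hE2')).mono
      (fun β h => ⟨h.1.1, h.1.2, h.2.1, h.2.2⟩)
  -- lift to the Ioc filter with a `β ≠ 1` guard
  have hlift : ∀ᶠ β in nhdsWithin α (Set.Ioc (0:ℝ) 1), β ≠ 1 →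
      (β ∈ Set.Ioo (0:ℝ) 1 ∧ s < β ∧
      (∀ x, renyiDiv β (W x) (q α) < renyiCap α W + δ) ∧
      renyiCap α W - δ < renyiInfo β P₀ W) := by
    obtain ⟨U, hUo, hαU, hUsub⟩ := mem_nhdsWithin.1 hBIG'
    refine mem_nhdsWithin.2 ⟨U, hUo, hαU, ?_⟩
    rintro β ⟨hβU, hβIoc⟩ hne
    exact hUsub ⟨hβU, hβIoc.1, lt_of_le_of_ne hβIoc.2 hne⟩
  have hone : ∀ᶠ β in nhdsWithin α (Set.Ioc (0:ℝ) 1), β = 1 → α = 1 := by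
    rcases eq_or_ne α 1 with hαe | hαe
    · exact Filter.Eventually.of_forall fun _ _ => hαe
    · filter_upwards [(eventually_ne_nhds hαe).filter_mono nhdsWithin_le_nhds] with β hβ h1
      exact absurd h1 hβ
  filter_upwards [eventually_mem_nhdsWithin, hlift, hone] with β hβIoc hBIG hβ1α
  rcases eq_or_ne β 1 with hβe | hβe
  · -- β = 1 forces α = 1 and the distance is zero
    have hαe := hβ1α hβe
    have hz : (∑ y, |q β y - q α y|) = 0 := by
      rw [hβe, hαe]
      simp
    rw [hz]
    simpa using hε
  · obtain ⟨hβIoo, hsβ, hP1div, hP2⟩ := hBIG hβe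
    have hβ0 : 0 < β := hβIoo.1
    have hβlt : β < 1 := hβIoo.2
    obtain ⟨hbddβ, hCβ0, hDCβ⟩ := pack β hβIoc
    -- P1 in exponential form
    have hP1 : ∀ x, Real.exp ((β - 1) * (renyiCap α W + δ)) ≤ Zs β (W x) (q α) := by
      intro x
      refine exp_le_Zs hβlt (hZqα x β hβ0 hβlt) ?_
      rw [← renyiDiv_eq hβe]
      exact (hP1div x).le
    -- capacity upper bound
    have hCle : renyiCap β W ≤ renyiCap α W + δ := by
      rw [hcap]
      refine csSup_le (hCSne β hβ0) fun c hc => ?_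
      obtain ⟨P, hPpmf, rfl⟩ := hc
      obtain ⟨hIB, _⟩ := sibson_bound hβ0 hβlt hPpmf hW (hqpmf α hα).1 hP1
      have hD := renyiDiv_nonneg hβ0 hβlt (renyiMean_pmf hβ0 hPpmf hW) (hqpmf α hα)
      linarith
    -- capacity lower bound
    have hCge : renyiCap α W - δ < renyiCap β W := by
      refine lt_of_lt_of_le hP2 ?_
      rw [hcap]
      exact le_csSup hbddβ ⟨P₀, hP₀pmf, rfl⟩
    -- near-optimal P at β
    obtain ⟨c₁, hc₁mem, hc₁⟩ := exists_lt_of_lt_csSup (hCSne β hβ0)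
      (show renyiCap β W - δ < sSup (CS β) by rw [← hcap]; linarith)
    obtain ⟨P, hPpmf, hc₁eq⟩ := hc₁mem
    rw [hc₁eq] at hc₁
    set qP : Y → ℝ := renyiMean β P W with hqPdef
    have hqPpmf : IsPMF qP := renyiMean_pmf hβ0 hPpmf hW
    -- Sibson bound with target q β
    have hc1 : ∀ x, Real.exp ((β - 1) * renyiCap β W) ≤ Zs β (W x) (q β) := by
      intro x
      refine exp_le_Zs hβlt (hZqpos β hβIoc hβe x) ?_
      rw [← renyiDiv_eq hβe]
      exact hDCβ x
    obtain ⟨hIB1, hZ1⟩ := sibson_bound hβ0 hβlt hPpmf hW (hqpmf β hβIoc).1 hc1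
    obtain ⟨hIB2, hZ2⟩ := sibson_bound hβ0 hβlt hPpmf hW (hqpmf α hα).1 hP1
    have hD1lt : renyiDiv β qP (q β) < δ := by linarith
    have hD2lt : renyiDiv β qP (q α) < 3 * δ := by linarith
    -- monotonicity down to order s
    have hDs1 : renyiDiv s qP (q β) ≤ δ :=
      le_trans (renyiDiv_mono hs0 hsβ.le hβlt hqPpmf (hqpmf β hβIoc).1 hZ1) hD1lt.le
    have hDs2 : renyiDiv s qP (q α) ≤ 3 * δ :=
      le_trans (renyiDiv_mono hs0 hsβ.le hβlt hqPpmf (hqpmf α hα).1 hZ2) hD2lt.le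
    -- positivity of the order-s sums
    have hZs1 : 0 < Zs s qP (q β) :=
      Zs_pos hs0 hs1 hqPpmf.1 (hqpmf β hβIoc).1
        (exists_pos_of_Zs_pos hβ0 hβlt hqPpmf.1 (hqpmf β hβIoc).1 hZ1)
    have hZs2 : 0 < Zs s qP (q α) :=
      Zs_pos hs0 hs1 hqPpmf.1 (hqpmf α hα).1
        (exists_pos_of_Zs_pos hβ0 hβlt hqPpmf.1 (hqpmf α hα).1 hZ2)
    -- exponential form at order s
    have hZη1 : 1 - η < Zs s qP (q β) := by
      have h := exp_le_Zs (c := δ) hs1 hZs1 (by rw [← renyiDiv_eq hs1.ne]; exact hDs1)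
      exact lt_of_lt_of_le (hkey δ hδ0.le (by linarith)) h
    have hZη2 : 1 - η < Zs s qP (q α) := by
      have h := exp_le_Zs (c := 3 * δ) hs1 hZs2 (by rw [← renyiDiv_eq hs1.ne]; exact hDs2)
      exact lt_of_lt_of_le (hkey (3 * δ) (by linarith) le_rfl) h
    -- total variation bounds
    have htv1 := hηtv qP (q β) hqPpmf (hqpmf β hβIoc) hZη1
    have htv2 := hηtv qP (q α) hqPpmf (hqpmf α hα) hZη2
    -- triangle inequality
    have htri : (∑ y, |q β y - q α y|) ≤
        (∑ y, |qP y - q β y|) + (∑ y, |qP y - q α y|) := by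
      rw [← Finset.sum_add_distrib]
      refine Finset.sum_le_sum fun y _ => ?_
      calc |q β y - q α y| ≤ |q β y - qP y| + |qP y - q α y| := abs_sub_le _ _ _
        _ = |qP y - q β y| + |qP y - q α y| := by rw [abs_sub_comm]
    have hnn : 0 ≤ ∑ y, |q β y - q α y| :=
      Finset.sum_nonneg fun y _ => abs_nonneg _
    rw [Real.dist_eq, sub_zero, abs_of_nonneg hnn]
    linarith
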